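/- Top-k selection monotonicity: let f : α → ℝ be injective on a finite set T, S ⊆ T, and k ≤ k' with k ≤ |S|, k' ≤ |T|. Then the set of k elements of S with the largest f-values is contained in the set of k' elements of T with the largest f-values, provided k' ≥ k + (|T| − |S|). In particular when S = T and k ≤ k', top-k(S) ⊆ top-k'(S). -/
import Mathlib


/-- `B` is the set of `k` elements of `A` with the largest `f`-scores. -/
def IsTopK {α : Type*} [DecidableEq α] (f : α → ℝ) (A B : Finset α) (k : ℕ) : Prop :=
  B ⊆ A ∧ B.card = k ∧ ∀ b ∈ B, ∀ a ∈ A \ B, f a < f b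

/-- Top-k selection monotonicity: for `S ⊆ T`, `k ≤ k'` with
`k ≤ |S|`, `k' ≤ |T|` and `k' ≥ k + (|T| − |S|)`, the top-`k` of `S` is
contained in the top-`k'` of `T`. -/
theorem stmt_12 {α : Type*} [DecidableEq α] (f : α → ℝ)
    (S T B B' : Finset α) (k k' : ℕ)
    (hinj : Set.InjOn f T) (hST : S ⊆ T) (hkk : k ≤ k')
    (hkS : k ≤ S.card) (hk'T : k' ≤ T.card)
    (hgap : k + (T.card - S.card) ≤ k')
    (hB : IsTopK f S B k) (hB' : IsTopK f T B' k') :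
    B ⊆ B' := by
  obtain ⟨hBS, hBk, hBtop⟩ := hB
  obtain ⟨hB'T, hB'k, hB'top⟩ := hB'
  intro b hb
  by_contra hbB'
  have hbT : b ∈ T := hST (hBS hb)
  classical
  set U : Finset α := T.filter (fun a => f b < f a) with hU
  have hB'U : B' ⊆ U := by
    intro b' hb'
    simp only [hU, Finset.mem_filter]
    exact ⟨hB'T hb', hB'top b' hb' b (Finset.mem_sdiff.mpr ⟨hbT, hbB'⟩)⟩
  have hUsub : U ⊆ (B \ {b}) ∪ (T \ S) := by
    intro a ha
    simp only [hU, Finset.mem_filter] at ha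
    obtain ⟨haT, hfa⟩ := ha
    by_cases haS : a ∈ S
    · have haB : a ∈ B := by
        by_contra haB
        exact absurd (hBtop b hb a (Finset.mem_sdiff.mpr ⟨haS, haB⟩)) (by linarith)
      refine Finset.mem_union_left _ (Finset.mem_sdiff.mpr ⟨haB, ?_⟩)
      simp only [Finset.mem_singleton]
      rintro rfl
      exact lt_irrefl _ hfa
    · exact Finset.mem_union_right _ (Finset.mem_sdiff.mpr ⟨haT, haS⟩)
  have h1 : k' ≤ U.card := hB'k ▸ Finset.card_le_card hB'U
  have h2 : U.card ≤ (B \ {b}).card + (T \ S).card :=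
    le_trans (Finset.card_le_card hUsub) (Finset.card_union_le _ _)
  have h3 : (B \ {b}).card = k - 1 := by
    rw [Finset.sdiff_singleton_eq_erase, Finset.card_erase_of_mem hb, hBk]
  have h4 : (T \ S).card = T.card - S.card := Finset.card_sdiff_of_subset hST
  have hk1 : 1 ≤ k := by
    rcases Nat.eq_zero_or_pos k with h | h
    · exact absurd (Finset.card_eq_zero.mp (hBk.trans h)) (Finset.ne_empty_of_mem hb)
    · exact h
  omega
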